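/- Let N be a (k,j)-perfect necklace over an alphabet of size b, and let n be a positive integer such that d_{b,n} | j and j | n, where d_{b,n} = ∏ p_i^{α_i} with p_i the primes dividing b and α_i the exponent of p_i in n. Then the cyclic word of length n·b^k obtained by concatenating n/j copies of N is (k,n)-perfect. -/

import Mathlib

/-- `w` (a word of length `k`) occurs at position `i` in the cyclic word given by
the first `L` symbols of `s`. -/
def OccursAt {A : Type*} {k : ℕ} (s : ℕ → A) (L : ℕ) (w : Fin k → A) (i : ℕ) : Prop :=
  ∀ j : Fin k, s ((i + (j : ℕ)) % L) = w j

/-- The cyclic word given by the first `n * |A| ^ k` values of `s` is a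
`(k,n)`-perfect necklace: every word of length `k` occurs exactly `n` times, and
the occurrence positions are pairwise distinct modulo `n`. -/
def IsPerfectNecklace {A : Type*} [Fintype A] (k n : ℕ) (s : ℕ → A) : Prop :=
  ∀ w : Fin k → A,
    Nat.card {i : ℕ // i < n * Fintype.card A ^ k ∧
      OccursAt s (n * Fintype.card A ^ k) w i} = n ∧
    ∀ i i' : ℕ, i < n * Fintype.card A ^ k → i' < n * Fintype.card A ^ k →
      OccursAt s (n * Fintype.card A ^ k) w i →
      OccursAt s (n * Fintype.card A ^ k) w i' →
      i % n = i' % n → i = i'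

/-- `d_{b,n} = ∏ pᵢ^{αᵢ}` where the `pᵢ` are the primes dividing `b` and `αᵢ` is
the exponent of `pᵢ` in the factorization of `n`. -/
def dFactor (b n : ℕ) : ℕ := ∏ p ∈ b.primeFactors, p ^ n.factorization p

/-- Transfer of occurrences between the repeated word and the original word. -/
lemma occ_iff {A : Type*} {k : ℕ} (N : ℕ → A) (w : Fin k → A) {L L' : ℕ}
    (hLL' : L ∣ L') (i : ℕ) :
    OccursAt (fun i => N (i % L)) L' w i ↔ OccursAt N L w (i % L) := by
  constructor <;> intro h t <;> have ht := h t
  · show N ((i % L + (t : ℕ)) % L) = w t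
    rw [show ((i % L + (t:ℕ)) % L) = (i + (t:ℕ)) % L' % L from by
      rw [Nat.mod_mod_of_dvd _ hLL', Nat.mod_add_mod]]
    exact ht
  · show N ((i + (t:ℕ)) % L' % L) = w t
    rw [Nat.mod_mod_of_dvd _ hLL', ← Nat.mod_add_mod]
    exact ht

/-- If `d_{b,n} ∣ j ∣ n` then `n / j` is coprime to `b`. -/
lemma cop_aux {b j n : ℕ} (hb : 0 < b) (hn : n ≠ 0) (hd : dFactor b n ∣ j)
    (hjn : j ∣ n) : Nat.Coprime (n / j) b := by
  by_contra hc
  obtain ⟨p, hp, hpd⟩ := Nat.exists_prime_and_dvd hc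
  have hpnj : p ∣ n / j := hpd.trans (Nat.gcd_dvd_left _ _)
  have hpb : p ∣ b := hpd.trans (Nat.gcd_dvd_right _ _)
  have hpm : p ∈ b.primeFactors := Nat.mem_primeFactors.mpr ⟨hp, hpb, by omega⟩
  have h1 : p ^ n.factorization p ∣ j :=
    (Finset.dvd_prod_of_mem (fun p => p ^ n.factorization p) hpm).trans hd
  have h2 : p ^ (n.factorization p + 1) ∣ n := by
    have h := mul_dvd_mul h1 hpnj
    rw [Nat.mul_div_cancel' hjn] at h
    rwa [pow_succ]
  exact Nat.pow_succ_factorization_not_dvd hn hp h2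

/-- Counting occurrences in the repeated word. -/
lemma count_aux {A : Type*} {k j n B : ℕ} (hB : 0 < B) (hjpos : 0 < j)
    (hjn : j ∣ n) (N : ℕ → A) (w : Fin k → A)
    (hcount : Nat.card {i : ℕ // i < j * B ∧ OccursAt N (j * B) w i} = j) :
    Nat.card {i : ℕ // i < n * B ∧
      OccursAt (fun i => N (i % (j * B))) (n * B) w i} = n := by
  have hLpos : 0 < j * B := Nat.mul_pos hjpos hB
  have hLL' : j * B ∣ n * B := mul_dvd_mul_right hjn B
  have hL'eq : n * B = n / j * (j * B) := by
    rw [← Nat.mul_assoc, Nat.div_mul_cancel hjn]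
  have e : {i : ℕ // i < n * B ∧ OccursAt (fun i => N (i % (j * B))) (n * B) w i} ≃
      {q : ℕ // q < j * B ∧ OccursAt N (j * B) w q} × Fin (n / j) := by
    refine ⟨fun x => (⟨x.1 % (j * B), Nat.mod_lt _ hLpos, (occ_iff N w hLL' x.1).mp x.2.2⟩,
      ⟨x.1 / (j * B), ?_⟩),
      fun y => ⟨y.1.1 + (j * B) * y.2.1, ?_, ?_⟩, ?_, ?_⟩
    · exact (Nat.div_lt_iff_lt_mul hLpos).mpr (lt_of_lt_of_eq x.2.1 hL'eq)
    · have h1 := y.1.2.1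
      have h2 := y.2.2
      rw [hL'eq]
      calc y.1.1 + (j * B) * y.2.1 < (j * B) * (y.2.1 + 1) := by
            rw [Nat.mul_add, Nat.mul_one]; omega
        _ ≤ (j * B) * (n / j) := Nat.mul_le_mul_left _ (by omega)
        _ = n / j * (j * B) := Nat.mul_comm _ _
    · rw [occ_iff N w hLL', Nat.add_mul_mod_self_left, Nat.mod_eq_of_lt y.1.2.1]
      exact y.1.2.2
    · intro x
      exact Subtype.ext (Nat.mod_add_div _ _)
    · intro y
      refine Prod.ext (Subtype.ext ?_) (Fin.ext ?_)
      · show (y.1.1 + (j * B) * y.2.1) % (j * B) = y.1.1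
        rw [Nat.add_mul_mod_self_left, Nat.mod_eq_of_lt y.1.2.1]
      · show (y.1.1 + (j * B) * y.2.1) / (j * B) = y.2.1
        rw [Nat.add_mul_div_left _ _ hLpos, Nat.div_eq_of_lt y.1.2.1, Nat.zero_add]
  rw [Nat.card_congr e, Nat.card_prod, hcount, Nat.card_eq_fintype_card,
    Fintype.card_fin, Nat.mul_div_cancel' hjn]

/-- Distinctness modulo `n` of occurrence positions in the repeated word. -/
lemma inj_aux {A : Type*} {k j n B : ℕ} (hB : 0 < B) (hjpos : 0 < j)
    (hjn : j ∣ n) (hcop : Nat.Coprime (n / j) B) (N : ℕ → A) (w : Fin k → A)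
    (hinj : ∀ q q' : ℕ, q < j * B → q' < j * B → OccursAt N (j * B) w q →
      OccursAt N (j * B) w q' → q % j = q' % j → q = q') :
    ∀ i i' : ℕ, i < n * B → i' < n * B →
      OccursAt (fun i => N (i % (j * B))) (n * B) w i →
      OccursAt (fun i => N (i % (j * B))) (n * B) w i' →
      i % n = i' % n → i = i' := by
  have hLpos : 0 < j * B := Nat.mul_pos hjpos hB
  have hLL' : j * B ∣ n * B := mul_dvd_mul_right hjn B
  have hL'eq : n * B = n / j * (j * B) := by
    rw [← Nat.mul_assoc, Nat.div_mul_cancel hjn]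
  have main : ∀ i i' : ℕ, i ≤ i' → i' < n * B → i % (j * B) = i' % (j * B) →
      i % n = i' % n → i = i' := by
    intro i i' hle hi' hq hmod
    have hdvdn : n ∣ i' - i := (Nat.modEq_iff_dvd' hle).mp hmod
    have hdvdL : j * B ∣ i' - i := (Nat.modEq_iff_dvd' hle).mp hq
    obtain ⟨t, ht⟩ := hdvdL
    have htlt : t < n / j := by
      have h1 : j * B * t < j * B * (n / j) := by
        rw [← ht]
        calc i' - i ≤ i' := Nat.sub_le _ _
          _ < n * B := hi'
          _ = j * B * (n / j) := by rw [hL'eq, Nat.mul_comm]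
      exact Nat.lt_of_mul_lt_mul_left h1
    have hnd : n ∣ j * B * t := ht ▸ hdvdn
    have hnjd : n / j ∣ B * t := by
      have h2 : j * (n / j) ∣ j * (B * t) := by
        rwa [Nat.mul_div_cancel' hjn, ← Nat.mul_assoc]
      exact (Nat.mul_dvd_mul_iff_left hjpos).mp h2
    have hnjt : n / j ∣ t := hcop.dvd_of_dvd_mul_left hnjd
    have ht0 : t = 0 := by
      rcases Nat.eq_zero_or_pos t with h | h
      · exact h
      · exact absurd (Nat.le_of_dvd h hnjt) (by omega)
    have : i' - i = 0 := by rw [ht, ht0, Nat.mul_zero]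
    omega
  intro i i' hi hi' ho ho' hmod
  have hq : i % (j * B) = i' % (j * B) := by
    apply hinj _ _ (Nat.mod_lt _ hLpos) (Nat.mod_lt _ hLpos)
      ((occ_iff N w hLL' i).mp ho) ((occ_iff N w hLL' i').mp ho')
    rw [Nat.mod_mod_of_dvd _ (dvd_mul_right j B),
      Nat.mod_mod_of_dvd _ (dvd_mul_right j B)]
    calc i % j = i % n % j := (Nat.mod_mod_of_dvd _ hjn).symm
      _ = i' % n % j := by rw [hmod]
      _ = i' % j := Nat.mod_mod_of_dvd _ hjn
  rcases Nat.le_total i i' with h | h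
  · exact main i i' h hi' hq hmod
  · exact (main i' i h hi hq.symm hmod.symm).symm

/-- If `N` is a `(k,j)`-perfect necklace and `d_{b,n} ∣ j ∣ n`, then the cyclic word
of length `n·b^k` obtained by repeating `N` exactly `n/j` times is `(k,n)`-perfect. -/
theorem repeat_perfect {A : Type*} [Fintype A] (b k j n : ℕ)
    (hb : Fintype.card A = b) (hb2 : 2 ≤ b) (hk : 0 < k) (hjpos : 0 < j)
    (hd : dFactor b n ∣ j) (hjn : j ∣ n)
    (N : ℕ → A) (hN : IsPerfectNecklace k j N) :
    IsPerfectNecklace k n (fun i => N (i % (j * b ^ k))) := by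
  subst hb
  rcases Nat.eq_zero_or_pos n with hn | hn
  · subst hn
    intro w
    constructor
    · have he : IsEmpty {i : ℕ // i < 0 * Fintype.card A ^ k ∧
        OccursAt (fun i => N (i % (j * Fintype.card A ^ k)))
          (0 * Fintype.card A ^ k) w i} := by
        constructor
        rintro ⟨i, hi, -⟩
        omega
      exact Nat.card_of_isEmpty
    · intro i i' h1 _ _ _ _
      omega
  · intro w
    have hB : 0 < Fintype.card A ^ k := Nat.pow_pos (by omega)
    have hcop : Nat.Coprime (n / j) (Fintype.card A ^ k) :=
      (cop_aux (by omega) hn.ne' hd hjn).pow_right k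
    exact ⟨count_aux hB hjpos hjn N w ((hN w).1),
      inj_aux hB hjpos hjn hcop N w ((hN w).2)⟩
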